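/- With W = 1 + Σ_{k≥1} w_k S^{−k} as above, res(W S³ W^{−1}) = (1−S)(w₃ + Sw₃ + S²w₃ − (Sw₁)·w₂ − (S²w₁)·(Sw₂) − w₁·(S²w₂) + w₁·(Sw₁)·(S²w₁)). -/
import Mathlib


open Finset

/-- The shift operator `S^j`: `(Sh γ j f)(x) = f(x + jγ)`. -/
def Sh (γ : ℝ) (j : ℤ) (f : ℝ → ℂ) : ℝ → ℂ := fun x => f (x + j * γ)

theorem stmt10 (γ : ℝ) (w v : ℕ → ℝ → ℂ)
    (hw0 : w 0 = 1) (hv0 : v 0 = 1)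
    (hinv : ∀ l : ℕ, 1 ≤ l →
      ∑ i ∈ Finset.range (l + 1), w i * Sh γ (-(i : ℤ)) (v (l - i)) = 0) :
    ∑ i ∈ Finset.range 4, w i * Sh γ ((3 : ℤ) - (i : ℤ)) (v (3 - i))
      = (w 3 + Sh γ 1 (w 3) + Sh γ 2 (w 3)
          - Sh γ 1 (w 1) * w 2 - Sh γ 2 (w 1) * Sh γ 1 (w 2) - w 1 * Sh γ 2 (w 2)
          + w 1 * Sh γ 1 (w 1) * Sh γ 2 (w 1))
        - Sh γ 1 (w 3 + Sh γ 1 (w 3) + Sh γ 2 (w 3)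
          - Sh γ 1 (w 1) * w 2 - Sh γ 2 (w 1) * Sh γ 1 (w 2) - w 1 * Sh γ 2 (w 2)
          + w 1 * Sh γ 1 (w 1) * Sh γ 2 (w 1)) := by
  funext x
  have h1 := congrFun (hinv 1 le_rfl) (x + γ)
  have h2 := congrFun (hinv 2 (by norm_num)) (x + 2*γ)
  have h3 := congrFun (hinv 3 (by norm_num)) (x + 3*γ)
  simp only [Finset.sum_range_succ, Finset.sum_range_zero, Sh, hw0, hv0,
    Pi.add_apply, Pi.sub_apply, Pi.mul_apply, Pi.one_apply, Pi.zero_apply,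
    Finset.sum_apply, zero_add] at h1 h2 h3 ⊢
  push_cast at h1 h2 h3 ⊢
  simp only [show x + γ + -0*γ = x + γ from by ring,
    show x + 2*γ + -0*γ = x + 2*γ from by ring,
    show x + 3*γ + -0*γ = x + 3*γ from by ring,
    show x + 2*γ + -1*γ = x + γ from by ring,
    show x + 3*γ + -1*γ = x + 2*γ from by ring,
    show x + 3*γ + -2*γ = x + γ from by ring,
    show x + 1*γ = x + γ from by ring,
    show x + γ + 1*γ = x + 2*γ from by ring,
    show x + γ + 2*γ = x + 3*γ from by ring] at h1 h2 h3 ⊢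
  linear_combination h3 + (w 1 x - w 1 (x + 3*γ)) * h2
    + (w 2 x - w 2 (x + 3*γ) - (w 1 x - w 1 (x + 3*γ)) * w 1 (x + 2*γ)) * h1
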